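/- For n ≥ 2 firms with qualities i.i.d. uniform on [0,1], assigned fixed thresholds θ₁ ≤ θ₂ ≤ ⋯ ≤ θₙ in [0,1], the expected number of inverted pairs equals (1/2)·Σ_{i<j} [θᵢ² + (θⱼ - θᵢ)² + (1 - θⱼ)²]. This function of (θ₁,…,θₙ) is minimized over the ordered simplex at θᵢ = (n + 2(i-1))/(4n - 2), and the minimum value is n(n-1)(5n-4)/(24(2n-1)). -/

import Mathlib

open MeasureTheory Set

/-- `x` and `y` lie in the same interval of the partition induced by thresholds `θ₀ ≤ θ₁`. -/
def samePart (θ₀ θ₁ x y : ℝ) : Prop :=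
  (x < min θ₀ θ₁ ∧ y < min θ₀ θ₁) ∨
  (min θ₀ θ₁ ≤ x ∧ x < max θ₀ θ₁ ∧ min θ₀ θ₁ ≤ y ∧ y < max θ₀ θ₁) ∨
  (max θ₀ θ₁ ≤ x ∧ max θ₀ θ₁ ≤ y)

/-- `(1/2)·Σ_{i<j} [θᵢ² + (θⱼ - θᵢ)² + (1 - θⱼ)²]`. -/
noncomputable def invSum (n : ℕ) (θ : Fin n → ℝ) : ℝ :=
  (1/2) * ∑ i : Fin n, ∑ j : Fin n,
    (if i < j then (θ i)^2 + (θ j - θ i)^2 + (1 - θ j)^2 else 0)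

/-- The optimal thresholds `θᵢ = (n + 2(i-1))/(4n-2)` (here `i` is 0-indexed). -/
noncomputable def θstar (n : ℕ) (i : Fin n) : ℝ := ((n : ℝ) + 2 * (i : ℕ)) / (4 * n - 2)

-- Gauss sums
lemma gauss1 (n : ℕ) : ∑ i : Fin n, (i : ℝ) = n * (n - 1) / 2 := by
  induction n with
  | zero => simp
  | succ m ih => rw [Fin.sum_univ_castSucc]; simp [ih]; push_cast; ring

lemma gauss2 (n : ℕ) : ∑ i : Fin n, (i : ℝ)^2 = n * (n - 1) * (2*n - 1) / 6 := by
  induction n with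
  | zero => simp
  | succ m ih => rw [Fin.sum_univ_castSucc]; simp [ih]; push_cast; ring

-- count lemma
lemma lt_count {n : ℕ} (c : Fin n → ℝ) :
    ∑ i : Fin n, ∑ j : Fin n, (if i < j then c j else 0)
      = ∑ j : Fin n, (j : ℕ) * c j := by
  rw [Finset.sum_comm]
  refine Finset.sum_congr rfl fun j _ => ?_
  rw [← Finset.sum_filter]
  have h : (Finset.univ.filter (fun i : Fin n => i < j)) = Finset.Iio j := by
    ext i; simp
  rw [h, Finset.sum_const, Fin.card_Iio]
  simp [mul_comm]

-- symmetric part lemma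
lemma symm_part {n : ℕ} (g : Fin n → Fin n → ℝ) (hsym : ∀ i j, g i j = g j i) :
    ∑ i : Fin n, ∑ j : Fin n, (if i < j then g i j else 0)
      = ((∑ i : Fin n, ∑ j : Fin n, g i j) - ∑ i : Fin n, g i i) / 2 := by
  have hswap : (∑ i : Fin n, ∑ j : Fin n, (if i < j then g i j else 0))
      = ∑ i : Fin n, ∑ j : Fin n, (if j < i then g j i else 0) := by rw [Finset.sum_comm]
  have h2 : (∑ i : Fin n, ∑ j : Fin n, (if i < j then g i j else 0))
      + (∑ i : Fin n, ∑ j : Fin n, (if i < j then g i j else 0))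
      = (∑ i : Fin n, ∑ j : Fin n, g i j) - ∑ i : Fin n, g i i := by
    nth_rewrite 2 [hswap]
    rw [← Finset.sum_sub_distrib, ← Finset.sum_add_distrib]
    refine Finset.sum_congr rfl fun i _ => ?_
    rw [← Finset.sum_add_distrib]
    have key : ∀ j : Fin n, ((if i < j then g i j else 0) + (if j < i then g j i else 0))
        = g i j - (if i = j then g i j else 0) := by
      intro j
      rcases lt_trichotomy i j with h | h | h
      · simp [h, not_lt.mpr h.le, h.ne]
      · subst h; simp
      · simp [h, not_lt.mpr h.le, h.ne', hsym j i]
    rw [Finset.sum_congr rfl fun j _ => key j, Finset.sum_sub_distrib, Finset.sum_ite_eq]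
    simp
  linarith

lemma invSum0 (n : ℕ) (θ : Fin n → ℝ) :
    (1/2 : ℝ) * ∑ i : Fin n, ∑ j : Fin n,
      (if i < j then (θ i)^2 + (θ j - θ i)^2 + (1 - θ j)^2 else 0)
    = ((2*(n:ℝ)-1) * (∑ i, (θ i)^2) - (∑ i, θ i)^2) / 2
      - (∑ i : Fin n, (i : ℕ) * θ i) + n*(n-1)/4 := by
  have key : ∀ i j : Fin n, (if i < j then (θ i)^2 + (θ j - θ i)^2 + (1 - θ j)^2 else 0)
      = 2*(if i < j then (θ i)^2 + (θ j)^2 else 0) - 2*(if i < j then θ i * θ j else 0)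
        - 2*(if i < j then θ j else 0) + (if i < j then 1 else 0) := by
    intro i j; by_cases h : i < j <;> simp [h] <;> ring
  have hsplit : ∑ i : Fin n, ∑ j : Fin n,
      (if i < j then (θ i)^2 + (θ j - θ i)^2 + (1 - θ j)^2 else 0)
      = 2*(∑ i : Fin n, ∑ j : Fin n, (if i < j then (θ i)^2 + (θ j)^2 else 0))
        - 2*(∑ i : Fin n, ∑ j : Fin n, (if i < j then θ i * θ j else 0))
        - 2*(∑ i : Fin n, ∑ j : Fin n, (if i < j then θ j else 0))
        + (∑ i : Fin n, ∑ j : Fin n, (if i < j then (1:ℝ) else 0)) := by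
    simp_rw [key, Finset.sum_add_distrib, Finset.sum_sub_distrib, ← Finset.mul_sum]
  have h1 : ∑ i : Fin n, ∑ j : Fin n, (if i < j then (θ i)^2 + (θ j)^2 else 0)
      = ((n:ℝ) - 1) * ∑ i, (θ i)^2 := by
    rw [symm_part _ (fun i j => by ring)]
    have : ∑ i : Fin n, ∑ j : Fin n, ((θ i)^2 + (θ j)^2)
        = 2 * (n:ℝ) * ∑ i, (θ i)^2 := by
      simp [Finset.sum_add_distrib, Finset.sum_const, Finset.card_univ, mul_comm]
      rw [← Finset.mul_sum]; ring
    rw [this]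
    have : ∑ i : Fin n, ((θ i)^2 + (θ i)^2) = 2 * ∑ i, (θ i)^2 := by
      rw [Finset.sum_add_distrib]; ring
    rw [this]; ring
  have h2 : ∑ i : Fin n, ∑ j : Fin n, (if i < j then θ i * θ j else 0)
      = ((∑ i, θ i)^2 - ∑ i, (θ i)^2) / 2 := by
    rw [symm_part _ (fun i j => by ring)]
    have : ∑ i : Fin n, ∑ j : Fin n, θ i * θ j = (∑ i, θ i)^2 := by
      rw [sq, Finset.sum_mul_sum]
    rw [this]
    congr 1
    refine congrArg _ (Finset.sum_congr rfl fun i _ => ?_)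
    ring
  have h3 := lt_count θ
  have h4 : ∑ i : Fin n, ∑ j : Fin n, (if i < j then (1:ℝ) else 0)
      = n*(n-1)/2 := by
    rw [lt_count (fun _ => (1:ℝ))]
    simp [gauss1 n]
  rw [hsplit, h1, h2, h3, h4]; ring

lemma sum_quad (n : ℕ) (a b c : ℝ) :
    ∑ i : Fin n, (a + b*(i:ℝ) + c*(i:ℝ)^2)
      = n*a + b*(n*(n-1)/2) + c*(n*(n-1)*(2*n-1)/6) := by
  rw [Finset.sum_add_distrib, Finset.sum_add_distrib, Finset.sum_const,
    ← Finset.mul_sum, ← Finset.mul_sum, gauss1, gauss2]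
  simp [Finset.card_univ, mul_comm]

lemma vol_samePart (a b : ℝ) (h0 : 0 ≤ a) (hab : a ≤ b) (hb1 : b ≤ 1) :
    (volume {p : ℝ × ℝ | p.1 ∈ Icc (0:ℝ) 1 ∧ p.2 ∈ Icc (0:ℝ) 1 ∧ samePart a b p.1 p.2}).toReal
      = a^2 + (b-a)^2 + (1-b)^2 := by
  have hmin : min a b = a := min_eq_left hab
  have hmax : max a b = b := max_eq_right hab
  have hset : {p : ℝ × ℝ | p.1 ∈ Icc (0:ℝ) 1 ∧ p.2 ∈ Icc (0:ℝ) 1 ∧ samePart a b p.1 p.2}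
      = (Ico 0 a ×ˢ Ico 0 a) ∪ (Ico a b ×ˢ Ico a b) ∪ (Icc b 1 ×ˢ Icc b 1) := by
    ext ⟨x, y⟩
    simp only [samePart, hmin, hmax, mem_setOf_eq, mem_Icc, mem_Ico, mem_union, mem_prod]
    constructor
    · rintro ⟨⟨hx0, hx1⟩, ⟨hy0, hy1⟩, (⟨h1,h2⟩|⟨h1,h2,h3,h4⟩|⟨h1,h2⟩)⟩
      · exact Or.inl (Or.inl ⟨⟨hx0,h1⟩,⟨hy0,h2⟩⟩)
      · exact Or.inl (Or.inr ⟨⟨h1,h2⟩,⟨h3,h4⟩⟩)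
      · exact Or.inr ⟨⟨h1,hx1⟩,⟨h2,hy1⟩⟩
    · rintro ((⟨⟨hx0,hxa⟩,⟨hy0,hya⟩⟩|⟨⟨hxa,hxb⟩,⟨hya,hyb⟩⟩)|⟨⟨hbx,hx1⟩,⟨hby,hy1⟩⟩)
      · exact ⟨⟨hx0, by linarith⟩, ⟨hy0, by linarith⟩, Or.inl ⟨hxa, hya⟩⟩
      · exact ⟨⟨by linarith, by linarith⟩, ⟨by linarith, by linarith⟩,
          Or.inr (Or.inl ⟨hxa,hxb,hya,hyb⟩)⟩
      · exact ⟨⟨by linarith, hx1⟩, ⟨by linarith, hy1⟩, Or.inr (Or.inr ⟨hbx, hby⟩)⟩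
  have m1 : MeasurableSet ((Ico a b ×ˢ Ico a b) : Set (ℝ×ℝ)) :=
    measurableSet_Ico.prod measurableSet_Ico
  have m2 : MeasurableSet ((Icc b 1 ×ˢ Icc b 1) : Set (ℝ×ℝ)) :=
    measurableSet_Icc.prod measurableSet_Icc
  have d12 : Disjoint ((Ico 0 a ×ˢ Ico 0 a) : Set (ℝ×ℝ)) (Ico a b ×ˢ Ico a b) := by
    rw [Set.disjoint_left]
    rintro ⟨x,y⟩ ⟨hx,-⟩ ⟨hx',-⟩
    exact absurd hx'.1 (not_le.mpr hx.2)
  have d3 : Disjoint (((Ico 0 a ×ˢ Ico 0 a) ∪ (Ico a b ×ˢ Ico a b)) : Set (ℝ×ℝ))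
      (Icc b 1 ×ˢ Icc b 1) := by
    rw [Set.disjoint_left]
    rintro ⟨x,y⟩ (⟨hx,-⟩|⟨hx,-⟩) ⟨hx',-⟩
    · exact absurd hx'.1 (not_le.mpr (lt_of_lt_of_le hx.2 hab))
    · exact absurd hx'.1 (not_le.mpr hx.2)
  rw [hset, measure_union d3 m2, measure_union d12 m1]
  rw [Measure.volume_eq_prod, Measure.prod_prod, Measure.prod_prod, Measure.prod_prod,
    Real.volume_Ico, Real.volume_Ico, Real.volume_Icc]
  rw [← ENNReal.ofReal_mul (by linarith), ← ENNReal.ofReal_mul (by linarith),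
    ← ENNReal.ofReal_mul (by linarith),
    ← ENNReal.ofReal_add (by nlinarith) (by nlinarith),
    ← ENNReal.ofReal_add (by nlinarith) (by nlinarith),
    ENNReal.toReal_ofReal (by nlinarith)]
  ring

/-- For `n` firms with i.i.d. uniform `[0,1]` qualities and fixed ordered thresholds
`θ₁ ≤ ⋯ ≤ θₙ` in `[0,1]`, the expected number of inverted pairs (a pair is inverted
with probability `1/2` exactly when both qualities lie in the same part of the
partition induced by the pair's thresholds) equals
`(1/2)·Σ_{i<j}[θᵢ² + (θⱼ-θᵢ)² + (1-θⱼ)²]`; this is minimized over the ordered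
simplex at `θᵢ = (n+2(i-1))/(4n-2)`, with minimum value `n(n-1)(5n-4)/(24(2n-1))`. -/
theorem stmt_9 (n : ℕ) (hn : 2 ≤ n) (θ : Fin n → ℝ)
    (hmono : Monotone θ) (hrange : ∀ i, θ i ∈ Icc (0:ℝ) 1) :
    (∑ i : Fin n, ∑ j : Fin n,
        (if i < j then
          (volume {p : ℝ × ℝ | p.1 ∈ Icc (0:ℝ) 1 ∧ p.2 ∈ Icc (0:ℝ) 1 ∧
              samePart (θ i) (θ j) p.1 p.2}).toReal / 2
        else 0))
      = invSum n θ ∧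
    invSum n (θstar n) ≤ invSum n θ ∧
    invSum n (θstar n) = n * (n - 1 : ℝ) * (5 * n - 4) / (24 * (2 * n - 1)) := by
  have hn' : (2:ℝ) ≤ (n:ℝ) := by exact_mod_cast hn
  have hd : (4*(n:ℝ)-2) ≠ 0 := by linarith
  have hd2 : (2*(n:ℝ)-1) ≠ 0 := by linarith
  have hd4 : (n:ℝ)*4-2 ≠ 0 := by linarith
  -- unfolded invSum
  have einv : ∀ ψ : Fin n → ℝ, invSum n ψ = (1/2 : ℝ) * ∑ i : Fin n, ∑ j : Fin n,
      (if i < j then (ψ i)^2 + (ψ j - ψ i)^2 + (1 - ψ j)^2 else 0) := fun ψ => rfl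
  -- aggregate sums for θstar
  have hAs : ∑ i : Fin n, θstar n i
      = (n:ℝ)*((n:ℝ)/(4*n-2)) + (2/(4*n-2))*((n:ℝ)*(n-1)/2) + 0*((n:ℝ)*(n-1)*(2*n-1)/6) := by
    rw [← sum_quad n ((n:ℝ)/(4*n-2)) (2/(4*n-2)) 0]
    exact Finset.sum_congr rfl fun i _ => by unfold θstar; ring
  have hBs : ∑ i : Fin n, (θstar n i)^2
      = (n:ℝ)*((n:ℝ)^2/(4*n-2)^2) + (4*n/(4*n-2)^2)*((n:ℝ)*(n-1)/2)
        + (4/(4*n-2)^2)*((n:ℝ)*(n-1)*(2*n-1)/6) := by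
    rw [← sum_quad n ((n:ℝ)^2/(4*n-2)^2) (4*n/(4*n-2)^2) (4/(4*n-2)^2)]
    refine Finset.sum_congr rfl fun i _ => ?_
    unfold θstar
    field_simp
    ring
  have hCs : ∑ i : Fin n, ((i:ℕ):ℝ) * θstar n i
      = (n:ℝ)*0 + ((n:ℝ)/(4*n-2))*((n:ℝ)*(n-1)/2) + (2/(4*n-2))*((n:ℝ)*(n-1)*(2*n-1)/6) := by
    rw [← sum_quad n 0 ((n:ℝ)/(4*n-2)) (2/(4*n-2))]
    exact Finset.sum_congr rfl fun i _ => by unfold θstar; ring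
  have hAhalf : ∑ i : Fin n, θstar n i = (n:ℝ)/2 := by
    rw [hAs]; field_simp; ring
  -- value at θstar
  have hval : invSum n (θstar n) = n * (n - 1 : ℝ) * (5 * n - 4) / (24 * (2 * n - 1)) := by
    rw [einv, invSum0, hAs, hBs, hCs]
    field_simp
    ring
  refine ⟨?_, ?_, hval⟩
  · -- volume computation
    rw [einv, Finset.mul_sum]
    refine Finset.sum_congr rfl fun i _ => ?_
    rw [Finset.mul_sum]
    refine Finset.sum_congr rfl fun j _ => ?_
    by_cases h : i < j
    · simp only [h, if_true]
      rw [vol_samePart (θ i) (θ j) (hrange i).1 (hmono h.le) (hrange j).2]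
      ring
    · simp [h]
  · -- minimality
    set δ : Fin n → ℝ := fun i => θ i - θstar n i with hδ
    set D := ∑ i : Fin n, δ i with hD
    set F := ∑ i : Fin n, (δ i)^2 with hF
    set G := ∑ i : Fin n, ((i:ℕ):ℝ) * δ i with hG
    set E := ∑ i : Fin n, θstar n i * δ i with hE
    have rA : ∑ i : Fin n, θ i = (n:ℝ)/2 + D := by
      rw [hD, ← hAhalf, ← Finset.sum_add_distrib]
      exact Finset.sum_congr rfl fun i _ => by simp [hδ]
    have rB : ∑ i : Fin n, (θ i)^2 = (∑ i : Fin n, (θstar n i)^2) + 2*E + F := by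
      rw [hE, hF, Finset.mul_sum, ← Finset.sum_add_distrib, ← Finset.sum_add_distrib]
      exact Finset.sum_congr rfl fun i _ => by simp only [hδ]; ring
    have rC : ∑ i : Fin n, ((i:ℕ):ℝ) * θ i = (∑ i : Fin n, ((i:ℕ):ℝ) * θstar n i) + G := by
      rw [hG, ← Finset.sum_add_distrib]
      exact Finset.sum_congr rfl fun i _ => by simp only [hδ]; ring
    have rE : (4*(n:ℝ)-2) * E = (n:ℝ) * D + 2 * G := by
      rw [hE, hD, hG, Finset.mul_sum, Finset.mul_sum, Finset.mul_sum, ← Finset.sum_add_distrib]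
      refine Finset.sum_congr rfl fun i _ => ?_
      unfold θstar
      field_simp
    have hcs : D^2 ≤ (n:ℝ) * F := by
      have := sq_sum_le_card_mul_sum_sq (s := (Finset.univ : Finset (Fin n))) (f := δ)
      simpa [Finset.card_univ] using this
    have hFpos : 0 ≤ F := Finset.sum_nonneg fun i _ => sq_nonneg _
    have main : invSum n θ - invSum n (θstar n) = ((2*(n:ℝ)-1)*F - D^2)/2 := by
      rw [einv θ, einv (θstar n), invSum0, invSum0, rA, rB, rC, hAhalf]
      linear_combination (1/2 : ℝ) * rE
    nlinarith [main, hcs, hFpos]
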